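/- Let E be a real inner product space, Ω ⊆ E an open convex set, and φ : Ω → ℝ a differentiable convex function with gradient ∇φ. Let Z be an Ω-valued random variable with law p_eval such that Z and φ(Z) are integrable and μ_eval := E_{p_eval}[Z] ∈ Ω, and let a ∈ Ω be any point (e.g. the Bayes act E_p[Z] of a model p). Then the evaluation loss decomposes as E_{p_eval}[D_φ(Z, a)] = D_φ(μ_eval, a) + E_{p_eval}[D_φ(Z, μ_eval)]: an estimation-error term measuring the Bregman divergence from the evaluation mean to the action, plus an irreducible dispersion term equal to the Jensen gap of p_eval. -/

import Mathlib

open MeasureTheory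
open scoped RealInnerProductSpace

/-- The Bregman divergence of `φ` with gradient field `g`:
`D_φ(x, y) = φ x − φ y − ⟪∇φ(y), x − y⟫`. -/
noncomputable def bregman {E : Type*} [NormedAddCommGroup E] [InnerProductSpace ℝ E]
    (φ : E → ℝ) (g : E → E) (x y : E) : ℝ :=
  φ x - φ y - ⟪g y, x - y⟫

/-- Evaluation-discrepancy decomposition under Bregman loss: the evaluation loss of
any act `a` splits into an estimation-error term `D_φ(μ_eval, a)` plus the
irreducible dispersion (Jensen gap) of the evaluation distribution. -/
theorem evaluation_discrepancy_decomposition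
    {E : Type*} [NormedAddCommGroup E] [InnerProductSpace ℝ E] [CompleteSpace E]
    (Ω : Set E) (hΩo : IsOpen Ω) (hΩc : Convex ℝ Ω)
    (φ : E → ℝ) (g : E → E)
    (hφ : ConvexOn ℝ Ω φ)
    (hg : ∀ y ∈ Ω, HasGradientAt φ (g y) y)
    {α : Type*} [MeasurableSpace α] (peval : Measure α) [IsProbabilityMeasure peval]
    (Z : α → E) (hZΩ : ∀ ω, Z ω ∈ Ω)
    (hZ : Integrable Z peval) (hφZ : Integrable (fun ω => φ (Z ω)) peval)
    (μeval : E) (hμeval : μeval = ∫ ω, Z ω ∂peval) (hμevalΩ : μeval ∈ Ω)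
    (a : E) (ha : a ∈ Ω) :
    ∫ ω, bregman φ g (Z ω) a ∂peval
      = bregman φ g μeval a + ∫ ω, bregman φ g (Z ω) μeval ∂peval := by
  have key : ∀ y : E, ∫ ω, bregman φ g (Z ω) y ∂peval
      = (∫ ω, φ (Z ω) ∂peval) - φ y - ⟪g y, μeval - y⟫ := by
    intro y
    have hZy : Integrable (fun ω => Z ω - y) peval := hZ.sub (integrable_const y)
    have hinner : Integrable (fun ω => ⟪g y, Z ω - y⟫) peval := hZy.const_inner (g y)
    have h1 : Integrable (fun ω => φ (Z ω) - φ y) peval := hφZ.sub (integrable_const _)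
    calc ∫ ω, bregman φ g (Z ω) y ∂peval
        = ∫ ω, (φ (Z ω) - φ y) - ⟪g y, Z ω - y⟫ ∂peval := rfl
      _ = (∫ ω, φ (Z ω) - φ y ∂peval) - ∫ ω, ⟪g y, Z ω - y⟫ ∂peval :=
          integral_sub h1 hinner
      _ = ((∫ ω, φ (Z ω) ∂peval) - ∫ _ω, φ y ∂peval) - ⟪g y, ∫ ω, Z ω - y ∂peval⟫ := by
          rw [integral_sub hφZ (integrable_const _),
            integral_inner hZy]
      _ = (∫ ω, φ (Z ω) ∂peval) - φ y - ⟪g y, μeval - y⟫ := by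
          rw [show (∫ ω, Z ω - y ∂peval) = (∫ ω, Z ω ∂peval) - ∫ _ω, y ∂peval from integral_sub hZ (integrable_const y), integral_const, integral_const,
            probReal_univ, one_smul, one_smul, hμeval]
  rw [key a, key μeval]
  simp only [bregman, sub_self, inner_zero_right]
  ring
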